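/- arXiv:1408.2208 — 2 statements merged into one kernel-verified Lean document; each statement's English description precedes it below -/
import Mathlib

section
/- Let Q be an m×ℓ matrix with orthonormal columns, 1 ≤ k ≤ ℓ, let A_k be the rank-k truncated SVD of A, and let B_k be the rank-k truncated SVD of QᵀA. Then ‖A − QB_k‖_F² ≤ ‖(I − QQᵀ)A_k‖_F² + Σ_{j=k+1}^n σ_j², where σ_j are the singular values of A. -/
open Matrix

noncomputable def frobNorm {m n : ℕ} (A : Matrix (Fin m) (Fin n) ℝ) : ℝ :=
  Real.sqrt (∑ i, ∑ j, (A i j) ^ 2)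

noncomputable def specNorm {m n : ℕ} (A : Matrix (Fin m) (Fin n) ℝ) : ℝ :=
  ‖(Matrix.toEuclideanLin A).toContinuousLinearMap‖

/-- The `j`-th largest singular value of `A` (0-indexed). -/
noncomputable def sv {m n : ℕ} (A : Matrix (Fin m) (Fin n) ℝ) (j : Fin n) : ℝ :=
  Real.sqrt
    (((show (Aᵀ * A).IsHermitian by simpa using Matrix.isHermitian_conjTranspose_mul_self A).eigenvalues ∘
        Tuple.sort (show (Aᵀ * A).IsHermitian by simpa using Matrix.isHermitian_conjTranspose_mul_self A).eigenvalues)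
      j.rev)

section Stmt6AuxSec
open BigOperators Finset
open scoped RealInnerProductSpace

set_option maxHeartbeats 1000000
noncomputable section
namespace Stmt6Aux



def F2 {a b : ℕ} (C : Matrix (Fin a) (Fin b) ℝ) : ℝ := ∑ i, ∑ j, (C i j)^2

lemma F2_nonneg {a b : ℕ} (C : Matrix (Fin a) (Fin b) ℝ) : 0 ≤ F2 C := by
  apply Finset.sum_nonneg; intro i _; apply Finset.sum_nonneg; intro j _; positivity

lemma F2_eq_trace {a b : ℕ} (C : Matrix (Fin a) (Fin b) ℝ) : F2 C = trace (Cᵀ * C) := by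
  unfold F2
  rw [Matrix.trace, Finset.sum_comm]
  simp [Matrix.diag, Matrix.mul_apply, sq]

lemma ip_eq {a b : ℕ} (X Y : Matrix (Fin a) (Fin b) ℝ) :
    trace (Xᵀ * Y) = ∑ i, ∑ j, X i j * Y i j := by
  rw [Matrix.trace, Finset.sum_comm]
  simp [Matrix.diag, Matrix.mul_apply]

lemma F2_add {a b : ℕ} (X Y : Matrix (Fin a) (Fin b) ℝ) :
    F2 (X + Y) = F2 X + 2 * trace (Xᵀ * Y) + F2 Y := by
  unfold F2
  rw [ip_eq]
  rw [Finset.mul_sum, ← Finset.sum_add_distrib, ← Finset.sum_add_distrib]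
  apply Finset.sum_congr rfl; intro i _
  rw [Finset.mul_sum, ← Finset.sum_add_distrib, ← Finset.sum_add_distrib]
  apply Finset.sum_congr rfl; intro j _
  simp [Matrix.add_apply]; ring

lemma F2_add' {a b : ℕ} (X Y : Matrix (Fin a) (Fin b) ℝ) (h : trace (Xᵀ * Y) = 0) :
    F2 (X + Y) = F2 X + F2 Y := by
  rw [F2_add, h]; ring

lemma F2_mul_left {a b c : ℕ} (W : Matrix (Fin a) (Fin b) ℝ) (C : Matrix (Fin b) (Fin c) ℝ)
    (hW : Wᵀ * W = 1) : F2 (W * C) = F2 C := by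
  rw [F2_eq_trace, F2_eq_trace, Matrix.transpose_mul, Matrix.mul_assoc,
    ← Matrix.mul_assoc Wᵀ, hW, Matrix.one_mul]

lemma F2_mul_right {a b c : ℕ} (C : Matrix (Fin a) (Fin b) ℝ) (W : Matrix (Fin c) (Fin b) ℝ)
    (hW : Wᵀ * W = 1) : F2 (C * Wᵀ) = F2 C := by
  rw [F2_eq_trace, F2_eq_trace, Matrix.transpose_mul, Matrix.transpose_transpose]
  rw [Matrix.mul_assoc, Matrix.trace_mul_comm W, Matrix.mul_assoc, Matrix.mul_assoc, hW,
    Matrix.mul_one]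

lemma F2_diag {a : ℕ} (d : Fin a → ℝ) : F2 (Matrix.diagonal d) = ∑ i, d i ^ 2 := by
  unfold F2
  apply Finset.sum_congr rfl
  intro i _
  rw [Finset.sum_eq_single i] <;> simp [Matrix.diagonal] <;> intros <;> simp_all [Ne.symm]

lemma F2_svd {a b c : ℕ} (U : Matrix (Fin a) (Fin c) ℝ) (V : Matrix (Fin b) (Fin c) ℝ)
    (d : Fin c → ℝ) (hU : Uᵀ * U = 1) (hV : Vᵀ * V = 1) :
    F2 (U * Matrix.diagonal d * Vᵀ) = ∑ i, d i ^ 2 := by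
  rw [F2_mul_right _ _ hV, F2_mul_left _ _ hU, F2_diag]

lemma trace_diag_mul_mul_diag {a : ℕ} (d e : Fin a → ℝ) (X : Matrix (Fin a) (Fin a) ℝ)
    (h : ∀ i, d i * e i = 0) :
    trace (Matrix.diagonal d * X * Matrix.diagonal e) = 0 := by
  rw [Matrix.trace]
  apply Finset.sum_eq_zero
  intro i _
  simp only [Matrix.diag, Matrix.mul_diagonal, Matrix.diagonal_mul]
  rw [mul_assoc, mul_comm (X i i), ← mul_assoc, h i, zero_mul]




def col {a b : ℕ} (C : Matrix (Fin a) (Fin b) ℝ) (j : Fin b) : EuclideanSpace ℝ (Fin a) :=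
  WithLp.toLp 2 (fun i => C i j)

lemma inner_col {a b : ℕ} (C D : Matrix (Fin a) (Fin b) ℝ) (j j' : Fin b) :
    ⟪col C j, col D j'⟫ = (Cᵀ * D) j j' := by
  simp [col, PiLp.inner_apply, Matrix.mul_apply, RCLike.inner_apply, Matrix.transpose_apply, mul_comm]

lemma F2_eq_sum_col {a b : ℕ} (C : Matrix (Fin a) (Fin b) ℝ) :
    F2 C = ∑ j, ‖col C j‖^2 := by
  unfold F2
  rw [Finset.sum_comm]
  apply Finset.sum_congr rfl
  intro j _
  rw [← real_inner_self_eq_norm_sq, PiLp.inner_apply]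
  simp [col, RCLike.inner_apply, sq]


lemma scalar_bound {r k : ℕ} (σ t : Fin r → ℝ) (hanti : Antitone σ) (h0 : ∀ j, 0 ≤ σ j)
    (ht0 : ∀ j, 0 ≤ t j) (ht1 : ∀ j, t j ≤ 1) (hsum : ∑ j, (1 - t j) ≤ (k : ℝ)) :
    ∑ j : Fin r, (if (j:ℕ) < k then 0 else σ j)^2 ≤ ∑ j : Fin r, σ j^2 * t j := by
  classical
  by_cases hrk : r ≤ k
  · have h1 : ∀ j : Fin r, (if (j:ℕ) < k then 0 else σ j)^2 = 0 := by
      intro j; rw [if_pos (lt_of_lt_of_le j.isLt hrk)]; ring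
    rw [Finset.sum_congr rfl (fun j _ => h1 j), Finset.sum_const, smul_zero]
    apply Finset.sum_nonneg; intro j _; exact mul_nonneg (sq_nonneg _) (ht0 j)
  · push_neg at hrk
    set κ : Fin r := ⟨k, hrk⟩ with hκ
    set P : Finset (Fin r) := Finset.univ.filter (fun j : Fin r => (j:ℕ) < k) with hP
    have hPio : P = Finset.Iio κ := by
      ext j; simp [hP, Fin.lt_def, hκ]
    have hcard : (P.card : ℝ) = k := by rw [hPio, Fin.card_Iio]
    rw [← Finset.sum_filter_add_sum_filter_not Finset.univ (fun j : Fin r => (j:ℕ) < k)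
      (fun j : Fin r => (if (j:ℕ) < k then 0 else σ j)^2)]
    rw [← Finset.sum_filter_add_sum_filter_not Finset.univ (fun j : Fin r => (j:ℕ) < k)
      (fun j : Fin r => σ j^2 * t j)]
    have e1 : ∑ j ∈ P, (if (j:ℕ) < k then 0 else σ j)^2 = 0 := by
      apply Finset.sum_eq_zero; intro j hj
      rw [hP] at hj; simp at hj
      rw [if_pos hj]; ring
    have e2 : ∀ j ∈ Finset.univ.filter (fun j : Fin r => ¬ (j:ℕ) < k),
        (if (j:ℕ) < k then 0 else σ j)^2 = σ j ^2 := by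
      intro j hj; simp at hj; rw [if_neg (by omega)]
    rw [e1, Finset.sum_congr rfl e2, zero_add]
    -- goal: ∑_{¬P} σ² ≤ ∑_{P} σ²t + ∑_{¬P} σ²t
    have key : ∑ j ∈ Finset.univ.filter (fun j : Fin r => ¬ (j:ℕ) < k), σ j^2 * (1 - t j)
        ≤ ∑ j ∈ P, σ j^2 * t j := by
      have c0 : (0:ℝ) ≤ σ κ ^2 := sq_nonneg _
      calc ∑ j ∈ Finset.univ.filter (fun j : Fin r => ¬ (j:ℕ) < k), σ j^2 * (1 - t j)
          ≤ ∑ j ∈ Finset.univ.filter (fun j : Fin r => ¬ (j:ℕ) < k), σ κ^2 * (1 - t j) := by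
            apply Finset.sum_le_sum; intro j hj; simp at hj
            have hj' : κ ≤ j := by rw [Fin.le_def]; simpa [hκ] using hj
            have := hanti hj'
            apply mul_le_mul_of_nonneg_right _ (by linarith [ht1 j])
            exact pow_le_pow_left₀ (h0 j) this 2
        _ ≤ ∑ j ∈ P, σ κ^2 * t j := by
            rw [← Finset.mul_sum, ← Finset.mul_sum]
            apply mul_le_mul_of_nonneg_left _ c0
            have split := Finset.sum_filter_add_sum_filter_not Finset.univ
              (fun j : Fin r => (j:ℕ) < k) (fun j => 1 - t j)
            have hPsum : ∑ j ∈ P, (1 - t j) + ∑ j ∈ P, t j = (k:ℝ) := by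
              rw [← Finset.sum_add_distrib]
              simp [Finset.sum_const, ← hcard]
            rw [← hP] at split
            linarith [split, hsum, hPsum]
        _ ≤ ∑ j ∈ P, σ j^2 * t j := by
            apply Finset.sum_le_sum; intro j hj
            rw [hPio] at hj; simp [Finset.mem_Iio] at hj
            have := hanti (le_of_lt hj)
            apply mul_le_mul_of_nonneg_right _ (ht0 j)
            exact pow_le_pow_left₀ (h0 κ) this 2
    have expand : ∑ j ∈ Finset.univ.filter (fun j : Fin r => ¬ (j:ℕ) < k), σ j^2
        = ∑ j ∈ Finset.univ.filter (fun j : Fin r => ¬ (j:ℕ) < k), σ j^2 * (1 - t j)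
        + ∑ j ∈ Finset.univ.filter (fun j : Fin r => ¬ (j:ℕ) < k), σ j^2 * t j := by
      rw [← Finset.sum_add_distrib]; apply Finset.sum_congr rfl; intro j _; ring
    rw [expand]
    linarith [key]

lemma EY {l n r k : ℕ}
    (W : Matrix (Fin l) (Fin r) ℝ) (V' : Matrix (Fin n) (Fin r) ℝ) (σ : Fin r → ℝ)
    (hW : Wᵀ * W = 1) (hV' : V'ᵀ * V' = 1) (hanti : Antitone σ) (h0 : ∀ j, 0 ≤ σ j)
    (R : Matrix (Fin l) (Fin n) ℝ) (S : Submodule ℝ (EuclideanSpace ℝ (Fin l)))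
    (hcol : ∀ j, col R j ∈ S) (hrank : Module.finrank ℝ S ≤ k) :
    ∑ j : Fin r, (if (j:ℕ) < k then 0 else σ j)^2 ≤ F2 (W * Matrix.diagonal σ * V'ᵀ - R) := by
  classical
  set M := W * Matrix.diagonal σ * V'ᵀ with hM
  have hWon : Orthonormal ℝ (col W) := by
    rw [orthonormal_iff_ite]
    intro i j
    rw [inner_col, hW]
    simp [Matrix.one_apply]
  set p := S.orthogonalProjectionOnto with hp
  set u : Fin r → EuclideanSpace ℝ (Fin l) := fun j' => col W j' - (p (col W j') : EuclideanSpace ℝ (Fin l)) with hu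
  set t : Fin r → ℝ := fun j' => ‖u j'‖^2 with ht
  have pyth : ∀ v : EuclideanSpace ℝ (Fin l),
      ‖v‖^2 = ‖(p v : EuclideanSpace ℝ (Fin l))‖^2 + ‖v - (p v : EuclideanSpace ℝ (Fin l))‖^2 := by
    intro v
    have h : ⟪v - (p v : EuclideanSpace ℝ (Fin l)), (p v : EuclideanSpace ℝ (Fin l))⟫ = 0 :=
        S.starProjection_inner_eq_zero v _ (p v).2
    have hv : v = (p v : EuclideanSpace ℝ (Fin l)) + (v - (p v : EuclideanSpace ℝ (Fin l))) := by
      abel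
    calc ‖v‖^2 = ‖(p v : EuclideanSpace ℝ (Fin l)) + (v - (p v : EuclideanSpace ℝ (Fin l)))‖^2 := by
          rw [← hv]
      _ = _ := by
          rw [norm_add_sq_real]
          rw [real_inner_comm, h]
          ring
  have hcolM : ∀ j : Fin n, col M j = ∑ j' : Fin r, (σ j' * V' j j') • col W j' := by
    intro j
    ext i
    rw [WithLp.ofLp_sum, Finset.sum_apply]
    show M i j = _
    rw [hM, Matrix.mul_assoc, Matrix.mul_apply]
    apply Finset.sum_congr rfl
    intro j' _
    rw [Matrix.diagonal_mul]
    show W i j' * (σ j' * V'ᵀ j' j) = ((σ j' * V' j j') • col W j') i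
    simp only [col, Matrix.transpose_apply, PiLp.smul_apply, smul_eq_mul]
    ring
  have hπm : ∀ j : Fin n, col M j - (p (col M j) : EuclideanSpace ℝ (Fin l))
      = ∑ j' : Fin r, (σ j' * V' j j') • u j' := by
    intro j
    rw [hcolM j, map_sum, Submodule.coe_sum, ← Finset.sum_sub_distrib]
    apply Finset.sum_congr rfl
    intro j' _
    rw [_root_.map_smul, SetLike.val_smul]
    simp only [hu]
    rw [smul_sub]
  have step2 : ∀ j : Fin n, ‖col M j - (p (col M j) : EuclideanSpace ℝ (Fin l))‖^2
      ≤ ‖col M j - col R j‖^2 := by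
    intro j
    have hpR : (p (col R j) : EuclideanSpace ℝ (Fin l)) = col R j := by
      have h2 : S.orthogonalProjectionOnto (col R j) = ⟨col R j, hcol j⟩ :=
        Submodule.orthogonalProjectionOnto_mem_subspace_eq_self (K := S) ⟨col R j, hcol j⟩
      rw [hp, h2]
    have hveq : (col M j - col R j) - (p (col M j - col R j) : EuclideanSpace ℝ (Fin l))
        = col M j - (p (col M j) : EuclideanSpace ℝ (Fin l)) := by
      rw [map_sub, Submodule.coe_sub, hpR]
      abel
    rw [← hveq]
    have := pyth (col M j - col R j)
    nlinarith [norm_nonneg (p (col M j - col R j) : EuclideanSpace ℝ (Fin l))]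
  have step1 : F2 (M - R) = ∑ j : Fin n, ‖col M j - col R j‖^2 := by
    rw [F2_eq_sum_col]
    apply Finset.sum_congr rfl
    intro j _
    congr 1
  have innu : ∀ j' j'' : Fin r, ∑ j : Fin n, (σ j' * V' j j') * (σ j'' * V' j j'')
      = if j' = j'' then σ j'^2 else 0 := by
    intro j' j''
    have : ∑ j : Fin n, (σ j' * V' j j') * (σ j'' * V' j j'')
        = σ j' * σ j'' * (V'ᵀ * V') j' j'' := by
      rw [Matrix.mul_apply, Finset.mul_sum]
      apply Finset.sum_congr rfl
      intro j _
      simp [Matrix.transpose_apply]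
      ring
    rw [this, hV']
    by_cases h : j' = j''
    · subst h; simp [Matrix.one_apply, sq]
    · simp [Matrix.one_apply, h]
  have step3 : ∑ j : Fin n, ‖col M j - (p (col M j) : EuclideanSpace ℝ (Fin l))‖^2
      = ∑ j' : Fin r, σ j'^2 * t j' := by
    have expand : ∀ j : Fin n, ‖col M j - (p (col M j) : EuclideanSpace ℝ (Fin l))‖^2
        = ∑ j' : Fin r, ∑ j'' : Fin r, ((σ j' * V' j j') * (σ j'' * V' j j'')) * ⟪u j', u j''⟫ := by
      intro j
      rw [hπm j, ← real_inner_self_eq_norm_sq, sum_inner]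
      apply Finset.sum_congr rfl
      intro j' _
      rw [inner_sum]
      apply Finset.sum_congr rfl
      intro j'' _
      rw [real_inner_smul_left, real_inner_smul_right]
      ring
    rw [Finset.sum_congr rfl (fun j _ => expand j)]
    rw [Finset.sum_comm]
    apply Finset.sum_congr rfl
    intro j' _
    rw [Finset.sum_comm]
    have : ∀ j'' : Fin r, ∑ j : Fin n, ((σ j' * V' j j') * (σ j'' * V' j j'')) * ⟪u j', u j''⟫
        = (if j' = j'' then σ j'^2 else 0) * ⟪u j', u j''⟫ := by
      intro j''
      rw [← Finset.sum_mul, innu]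
    rw [Finset.sum_congr rfl (fun j'' _ => this j'')]
    have h3 : ∀ j'' : Fin r, (if j' = j'' then σ j'^2 else 0) * ⟪u j', u j''⟫
        = if j' = j'' then σ j'^2 * ⟪u j', u j''⟫ else 0 := by
      intro j''; split <;> simp
    rw [Finset.sum_congr rfl (fun j'' _ => h3 j'')]
    rw [Finset.sum_ite_eq Finset.univ j' (fun j'' => σ j'^2 * ⟪u j', u j''⟫)]
    simp only [Finset.mem_univ, if_true, ht]
    rw [real_inner_self_eq_norm_sq]
  have ht0 : ∀ j', 0 ≤ t j' := fun j' => sq_nonneg _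
  have hw1 : ∀ j', ‖col W j'‖ = 1 := fun j' => hWon.1 j'
  have ht1 : ∀ j', t j' ≤ 1 := by
    intro j'
    have h1 := pyth (col W j')
    rw [hw1 j'] at h1
    have h2 := sq_nonneg ‖(p (col W j') : EuclideanSpace ℝ (Fin l))‖
    simp only [ht, hu]
    norm_num at h1
    linarith
  set b := stdOrthonormalBasis ℝ S with hb
  have hpw : ∀ v : EuclideanSpace ℝ (Fin l), ‖(p v : EuclideanSpace ℝ (Fin l))‖^2
      = ∑ i, ⟪(b i : EuclideanSpace ℝ (Fin l)), v⟫^2 := by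
    intro v
    have hn : ‖(p v : EuclideanSpace ℝ (Fin l))‖ = ‖p v‖ := Submodule.norm_coe _
    rw [hn, ← b.repr.norm_map (p v), EuclideanSpace.norm_eq, Real.sq_sqrt (by positivity)]
    apply Finset.sum_congr rfl
    intro i _
    rw [OrthonormalBasis.repr_apply_apply, hp, Submodule.inner_orthogonalProjectionOnto_eq_of_mem_left,
      Real.norm_eq_abs, sq_abs]
  have hsumt : ∑ j' : Fin r, (1 - t j') ≤ (k:ℝ) := by
    have e : ∀ j', 1 - t j' = ‖(p (col W j') : EuclideanSpace ℝ (Fin l))‖^2 := by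
      intro j'
      have h1 := pyth (col W j')
      rw [hw1 j'] at h1
      simp only [ht]
      linarith
    rw [Finset.sum_congr rfl (fun j' _ => e j')]
    rw [Finset.sum_congr rfl (fun j' _ => hpw (col W j'))]
    rw [Finset.sum_comm]
    have bd : ∀ i, ∑ j' : Fin r, ⟪(b i : EuclideanSpace ℝ (Fin l)), col W j'⟫^2 ≤ 1 := by
      intro i
      have bes := hWon.sum_inner_products_le (s := Finset.univ)
        ((b i : EuclideanSpace ℝ (Fin l)))
      have hbn : ‖(b i : EuclideanSpace ℝ (Fin l))‖ = 1 := b.orthonormal.1 i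
      calc ∑ j' : Fin r, ⟪(b i : EuclideanSpace ℝ (Fin l)), col W j'⟫^2
          = ∑ j' : Fin r, ‖⟪col W j', (b i : EuclideanSpace ℝ (Fin l))⟫‖^2 := by
            apply Finset.sum_congr rfl; intro j' _
            rw [real_inner_comm, Real.norm_eq_abs, sq_abs]
        _ ≤ ‖(b i : EuclideanSpace ℝ (Fin l))‖^2 := bes
        _ = 1 := by rw [hbn]; norm_num
    calc ∑ i, ∑ j' : Fin r, ⟪(b i : EuclideanSpace ℝ (Fin l)), col W j'⟫^2
        ≤ ∑ _i : Fin (Module.finrank ℝ S), (1:ℝ) := Finset.sum_le_sum (fun i _ => bd i)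
      _ = Module.finrank ℝ S := by simp
      _ ≤ k := by exact_mod_cast hrank
  calc ∑ j : Fin r, (if (j:ℕ) < k then 0 else σ j)^2
      ≤ ∑ j' : Fin r, σ j'^2 * t j' := scalar_bound σ t hanti h0 ht0 ht1 hsumt
    _ = ∑ j : Fin n, ‖col M j - (p (col M j) : EuclideanSpace ℝ (Fin l))‖^2 := step3.symm
    _ ≤ ∑ j : Fin n, ‖col M j - col R j‖^2 := Finset.sum_le_sum (fun j _ => step2 j)
    _ = F2 (M - R) := step1.symm



lemma frob_sq {a b : ℕ} (C : Matrix (Fin a) (Fin b) ℝ) : frobNorm C ^ 2 = F2 C := by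
  unfold frobNorm F2
  exact Real.sq_sqrt (by positivity)


end Stmt6Aux
end
end Stmt6AuxSec

set_option maxHeartbeats 1000000

theorem stmt6 {m n l k : ℕ} (hmn : n ≤ m) (hk : 1 ≤ k) (hkl : k ≤ l) (hkn : k < n)
    (A Ak U : Matrix (Fin m) (Fin n) ℝ) (V : Matrix (Fin n) (Fin n) ℝ)
    (σ : Fin n → ℝ) (hU : Uᵀ * U = 1) (hV : Vᵀ * V = 1)
    (hσanti : Antitone σ) (hσ0 : ∀ j, 0 ≤ σ j)
    (hA : A = U * Matrix.diagonal σ * Vᵀ)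
    (hAk : Ak = U * Matrix.diagonal (fun j : Fin n => if (j : ℕ) < k then σ j else 0) * Vᵀ)
    (Q : Matrix (Fin m) (Fin l) ℝ) (hQ : Qᵀ * Q = 1)
    (W : Matrix (Fin l) (Fin (min l n)) ℝ) (V' : Matrix (Fin n) (Fin (min l n)) ℝ)
    (σ' : Fin (min l n) → ℝ) (hW : Wᵀ * W = 1) (hV' : V'ᵀ * V' = 1)
    (hσ'anti : Antitone σ') (hσ'0 : ∀ j, 0 ≤ σ' j)
    (hQA : Qᵀ * A = W * Matrix.diagonal σ' * V'ᵀ)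
    (Bk : Matrix (Fin l) (Fin n) ℝ)
    (hBk : Bk = W * Matrix.diagonal (fun j : Fin (min l n) => if (j : ℕ) < k then σ' j else 0) * V'ᵀ) :
    frobNorm (A - Q * Bk) ^ 2 ≤ frobNorm ((1 - Q * Qᵀ) * Ak) ^ 2 +
      ∑ j ∈ Finset.univ.filter (fun j : Fin n => k ≤ (j : ℕ)), σ j ^ 2 := by
  classical
  have hkn' : k ≤ n := hkn.le
  set P : Matrix (Fin m) (Fin m) ℝ := 1 - Q * Qᵀ with hPdef
  have hPQ : P * Q = 0 := by
    rw [hPdef, Matrix.sub_mul, Matrix.one_mul, Matrix.mul_assoc, hQ, Matrix.mul_one, sub_self]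
  have hPT : Pᵀ = P := by
    rw [hPdef, Matrix.transpose_sub, Matrix.transpose_one, Matrix.transpose_mul,
      Matrix.transpose_transpose]
  have hPP : P * P = P := by
    rw [hPdef, Matrix.sub_mul, Matrix.one_mul, Matrix.mul_sub, Matrix.mul_one,
      Matrix.mul_assoc Q Qᵀ (Q*Qᵀ), ← Matrix.mul_assoc Qᵀ Q Qᵀ, hQ, Matrix.one_mul]
    abel
  have hfun1 : (fun j : Fin n => σ j - if (j:ℕ) < k then σ j else 0)
      = (fun j : Fin n => if (j:ℕ) < k then 0 else σ j) := by
    funext j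
    by_cases h : (j:ℕ) < k <;> simp [Pi.sub_apply, h]
  have hAmk : A - Ak = U * Matrix.diagonal (fun j : Fin n => if (j:ℕ) < k then 0 else σ j) * Vᵀ := by
    rw [hA, hAk, ← Matrix.sub_mul, ← Matrix.mul_sub, Matrix.diagonal_sub, hfun1]
  have hQABk : Qᵀ * A - Bk
      = W * Matrix.diagonal (fun j : Fin (min l n) => if (j:ℕ) < k then 0 else σ' j) * V'ᵀ := by
    have hfun2 : (fun j : Fin (min l n) => σ' j - if (j:ℕ) < k then σ' j else 0)
        = (fun j : Fin (min l n) => if (j:ℕ) < k then 0 else σ' j) := by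
      funext j
      by_cases h : (j:ℕ) < k <;> simp [Pi.sub_apply, h]
    rw [hQA, hBk, ← Matrix.sub_mul, ← Matrix.mul_sub, Matrix.diagonal_sub, hfun2]
  -- Step A
  have decomp1 : A - Q * Bk = P * A + Q * (Qᵀ * A - Bk) := by
    rw [hPdef, Matrix.sub_mul, Matrix.one_mul, Matrix.mul_sub, Matrix.mul_assoc]
    abel
  have crossA : Matrix.trace ((P * A)ᵀ * (Q * (Qᵀ * A - Bk))) = 0 := by
    rw [Matrix.transpose_mul, hPT, Matrix.mul_assoc, ← Matrix.mul_assoc P Q, hPQ,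
      Matrix.zero_mul, Matrix.mul_zero, Matrix.trace_zero]
  have eqA : Stmt6Aux.F2 (A - Q * Bk) = Stmt6Aux.F2 (P * A) + Stmt6Aux.F2 (Qᵀ * A - Bk) := by
    rw [decomp1, Stmt6Aux.F2_add' _ _ crossA, Stmt6Aux.F2_mul_left _ _ hQ]
  -- Step B
  have decomp2 : P * A = P * Ak + P * (A - Ak) := by
    rw [← Matrix.mul_add]
    congr 1
    abel
  have crossB : Matrix.trace ((P * Ak)ᵀ * (P * (A - Ak))) = 0 := by
    rw [Matrix.transpose_mul, hPT, Matrix.mul_assoc, ← Matrix.mul_assoc P P, hPP]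
    rw [hAmk, hAk]
    have hre : (U * Matrix.diagonal (fun j : Fin n => if (j:ℕ) < k then σ j else 0) * Vᵀ)ᵀ *
        (P * (U * Matrix.diagonal (fun j : Fin n => if (j:ℕ) < k then 0 else σ j) * Vᵀ))
        = V * (Matrix.diagonal (fun j : Fin n => if (j:ℕ) < k then σ j else 0) * (Uᵀ * P * U) *
            Matrix.diagonal (fun j : Fin n => if (j:ℕ) < k then 0 else σ j)) * Vᵀ := by
      simp only [Matrix.transpose_mul, Matrix.transpose_transpose, Matrix.diagonal_transpose,
        Matrix.mul_assoc]
    rw [hre, Matrix.mul_assoc, Matrix.trace_mul_comm V, Matrix.mul_assoc, hV, Matrix.mul_one]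
    apply Stmt6Aux.trace_diag_mul_mul_diag
    intro i
    by_cases h : (i:ℕ) < k <;> simp [h]
  have eqB : Stmt6Aux.F2 (P * A) = Stmt6Aux.F2 (P * Ak) + Stmt6Aux.F2 (P * (A - Ak)) := by
    rw [decomp2, Stmt6Aux.F2_add' _ _ crossB]
  -- Step C
  have decomp3 : A - Ak = P * (A - Ak) + Q * (Qᵀ * (A - Ak)) := by
    rw [hPdef, Matrix.sub_mul, Matrix.one_mul, ← Matrix.mul_assoc]
    abel
  have crossC : Matrix.trace ((P * (A - Ak))ᵀ * (Q * (Qᵀ * (A - Ak)))) = 0 := by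
    rw [Matrix.transpose_mul, hPT, Matrix.mul_assoc, ← Matrix.mul_assoc P Q, hPQ,
      Matrix.zero_mul, Matrix.mul_zero, Matrix.trace_zero]
  have eqC : Stmt6Aux.F2 (A - Ak)
      = Stmt6Aux.F2 (P * (A - Ak)) + Stmt6Aux.F2 (Qᵀ * (A - Ak)) := by
    conv_lhs => rw [decomp3]
    rw [Stmt6Aux.F2_add' _ _ crossC, Stmt6Aux.F2_mul_left _ _ hQ]
  -- Step D : values
  have valAmk : Stmt6Aux.F2 (A - Ak)
      = ∑ j ∈ Finset.univ.filter (fun j : Fin n => k ≤ (j:ℕ)), σ j ^ 2 := by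
    rw [hAmk, Stmt6Aux.F2_svd _ _ _ hU hV, Finset.sum_filter]
    apply Finset.sum_congr rfl
    intro j _
    by_cases h : (j:ℕ) < k
    · simp [h, Nat.not_le.mpr h]
    · simp [h, Nat.le_of_not_lt h]
  have valBk : Stmt6Aux.F2 (Qᵀ * A - Bk)
      = ∑ j : Fin (min l n), (if (j:ℕ) < k then 0 else σ' j) ^ 2 := by
    rw [hQABk, Stmt6Aux.F2_svd _ _ _ hW hV']
  -- Step E : Eckart-Young
  set g : Fin n → EuclideanSpace ℝ (Fin l) := fun a => Stmt6Aux.col (Qᵀ * U) a with hg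
  set h' : Fin k → EuclideanSpace ℝ (Fin l) := fun c => g (Fin.castLE hkn' c) with hh'
  set S := Submodule.span ℝ (Set.range h') with hS
  have hrank : Module.finrank ℝ S ≤ k := by
    refine le_trans (finrank_span_le_card _) ?_
    rw [Set.toFinset_range]
    exact le_trans Finset.card_image_le (by simp)
  have hcolR : ∀ j : Fin n, Stmt6Aux.col (Qᵀ * Ak) j ∈ S := by
    intro j
    have hexp : Stmt6Aux.col (Qᵀ * Ak) j
        = ∑ a : Fin n, ((if (a:ℕ) < k then σ a else 0) * V j a) • g a := by
      ext i
      rw [WithLp.ofLp_sum, Finset.sum_apply]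
      show (Qᵀ * Ak) i j = _
      rw [hAk, ← Matrix.mul_assoc, ← Matrix.mul_assoc, Matrix.mul_apply]
      apply Finset.sum_congr rfl
      intro a _
      rw [Matrix.mul_diagonal]
      simp only [hg, Stmt6Aux.col, PiLp.smul_apply, smul_eq_mul, Matrix.transpose_apply]
      ring
    rw [hexp]
    apply Submodule.sum_mem
    intro a _
    by_cases ha : (a:ℕ) < k
    · apply Submodule.smul_mem
      apply Submodule.subset_span
      refine ⟨⟨(a:ℕ), ha⟩, ?_⟩
      simp only [hh']
      congr 1
    · rw [if_neg ha, zero_mul, zero_smul]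
      exact Submodule.zero_mem _
  have hEY := Stmt6Aux.EY W V' σ' hW hV' hσ'anti hσ'0 (Qᵀ * Ak) S hcolR hrank
  have hMR : W * Matrix.diagonal σ' * V'ᵀ - Qᵀ * Ak = Qᵀ * (A - Ak) := by
    rw [← hQA, ← Matrix.mul_sub]
  rw [hMR] at hEY
  -- Final assembly
  rw [Stmt6Aux.frob_sq, Stmt6Aux.frob_sq, eqA, eqB, ← valAmk]
  linarith [hEY, eqC, valBk]
end

section
/- Let A be an m×n real matrix with singular values σ_1 ≥ ... ≥ σ_n, and let B be a matrix of rank at most k. Then ‖A − B‖_F² ≥ σ_1²(A − B) + Σ_{i=2}^{n−k} σ_{i+k}²(A). In particular, ‖A − B‖₂² ≤ ‖A − B‖_F² − Σ_{i=k+2}^{n} σ_i²(A). -/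
open Matrix

namespace SVH

variable {m n : ℕ}

noncomputable def lam (M : Matrix (Fin m) (Fin n) ℝ) : Fin n → ℝ :=
  (show (Mᵀ * M).IsHermitian by simpa using Matrix.isHermitian_conjTranspose_mul_self M).eigenvalues

noncomputable def srt (M : Matrix (Fin m) (Fin n) ℝ) : Equiv.Perm (Fin n) :=
  Tuple.sort (lam M)

noncomputable def mu (M : Matrix (Fin m) (Fin n) ℝ) : Fin n → ℝ :=
  lam M ∘ ⇑(srt M)

noncomputable def bas (M : Matrix (Fin m) (Fin n) ℝ) :
    OrthonormalBasis (Fin n) ℝ (EuclideanSpace ℝ (Fin n)) :=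
  (show (Mᵀ * M).IsHermitian by simpa using Matrix.isHermitian_conjTranspose_mul_self M).eigenvectorBasis

lemma sv_eq (M : Matrix (Fin m) (Fin n) ℝ) (j : Fin n) :
    sv M j = Real.sqrt (mu M j.rev) := rfl

lemma mu_mono (M : Matrix (Fin m) (Fin n) ℝ) : Monotone (mu M) :=
  Tuple.monotone_sort (lam M)

lemma lam_nonneg (M : Matrix (Fin m) (Fin n) ℝ) (i : Fin n) : 0 ≤ lam M i := by
  have h : (Mᴴ * M).PosSemidef := Matrix.posSemidef_conjTranspose_mul_self M
  have ht : Mᴴ = Mᵀ := by ext i j; simp [Matrix.conjTranspose_apply]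
  rw [ht] at h
  exact h.eigenvalues_nonneg i

lemma mu_nonneg (M : Matrix (Fin m) (Fin n) ℝ) (i : Fin n) : 0 ≤ mu M i :=
  lam_nonneg M _

lemma sv_nonneg (M : Matrix (Fin m) (Fin n) ℝ) (j : Fin n) : 0 ≤ sv M j :=
  Real.sqrt_nonneg _

lemma sv_sq (M : Matrix (Fin m) (Fin n) ℝ) (j : Fin n) :
    sv M j ^ 2 = mu M j.rev := by
  rw [sv_eq, Real.sq_sqrt (mu_nonneg M _)]

lemma apply_bas (M : Matrix (Fin m) (Fin n) ℝ) (j : Fin n) :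
    Matrix.toEuclideanLin (Mᵀ * M) (bas M j) = lam M j • bas M j := by
  have h := (show (Mᵀ * M).IsHermitian by simpa using Matrix.isHermitian_conjTranspose_mul_self M).mulVec_eigenvectorBasis j
  ext i
  simpa [Matrix.toEuclideanLin_apply, bas, lam] using congrFun h i

lemma repr_H (M : Matrix (Fin m) (Fin n) ℝ) (x : EuclideanSpace ℝ (Fin n)) (i : Fin n) :
    (bas M).repr (Matrix.toEuclideanLin (Mᵀ * M) x) i
      = lam M i * (bas M).repr x i := by
  conv_lhs => rw [← (bas M).sum_repr x, map_sum, map_sum]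
  simp only [_root_.map_smul, apply_bas, OrthonormalBasis.repr_self]
  have hs : ∀ (f : Fin n → EuclideanSpace ℝ (Fin n)), (∑ j, f j) i = ∑ j, f j i := by
    intro f; rw [WithLp.ofLp_sum]; exact Finset.sum_apply i Finset.univ _
  rw [hs]
  simp [EuclideanSpace.single_apply]
  ring

lemma inner_H (M : Matrix (Fin m) (Fin n) ℝ) (x : EuclideanSpace ℝ (Fin n)) :
    (inner ℝ x (Matrix.toEuclideanLin (Mᵀ * M) x) : ℝ)
      = ∑ i, lam M i * ((bas M).repr x i) ^ 2 := by
  rw [← (bas M).repr.inner_map_map x (Matrix.toEuclideanLin (Mᵀ * M) x)]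
  simp only [PiLp.inner_apply, RCLike.inner_apply, starRingEnd_apply, star_trivial, repr_H]
  exact Finset.sum_congr rfl fun i _ => by ring

lemma norm_sq_apply (M : Matrix (Fin m) (Fin n) ℝ) (x : EuclideanSpace ℝ (Fin n)) :
    ‖Matrix.toEuclideanLin M x‖ ^ 2 = ∑ i, lam M i * ((bas M).repr x i) ^ 2 := by
  rw [← inner_H, ← real_inner_self_eq_norm_sq]
  simp only [PiLp.inner_apply, RCLike.inner_apply, starRingEnd_apply, star_trivial,
    Matrix.toEuclideanLin_apply]
  show ∑ i, (M *ᵥ _) i * (M *ᵥ _) i = ∑ i, ((Mᵀ * M) *ᵥ _) i * _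
  have h1 : ∀ (v : Fin n → ℝ), (∑ i, (M *ᵥ v) i * (M *ᵥ v) i) = ∑ i, v i * ((Mᵀ * M) *ᵥ v) i := by
    intro v
    have h2 : (M *ᵥ v) ⬝ᵥ (M *ᵥ v) = v ⬝ᵥ ((Mᵀ * M) *ᵥ v) := by
      rw [← Matrix.mulVec_mulVec, Matrix.dotProduct_mulVec v, ← Matrix.mulVec_transpose,
        Matrix.transpose_transpose]
    simpa [dotProduct] using h2
  rw [h1]; exact Finset.sum_congr rfl fun i _ => mul_comm _ _

lemma norm_sq (M : Matrix (Fin m) (Fin n) ℝ) (x : EuclideanSpace ℝ (Fin n)) :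
    ‖x‖ ^ 2 = ∑ i, ((bas M).repr x i) ^ 2 := by
  rw [← (bas M).repr.norm_map x, EuclideanSpace.norm_eq, Real.sq_sqrt (by positivity)]
  simp [sq_abs]

/-! ### counting -/

lemma card_filter_lt (t : ℕ) (ht : t ≤ n) :
    (Finset.univ.filter fun j : Fin n => (j : ℕ) < t).card = t := by
  have hinj : Function.Injective (fun a : Fin t => (⟨a, by omega⟩ : Fin n)) := by
    intro a b h
    simp only [Fin.mk.injEq] at h
    exact Fin.ext h
  rw [show (Finset.univ.filter fun j : Fin n => (j : ℕ) < t)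
      = Finset.map ⟨fun a : Fin t => ⟨a, by omega⟩, hinj⟩ Finset.univ from ?_]
  · simp
  · ext j
    simp only [Finset.mem_filter, Finset.mem_univ, true_and, Finset.mem_map,
      Function.Embedding.coeFn_mk]
    constructor
    · intro h; exact ⟨⟨j, h⟩, rfl⟩
    · rintro ⟨a, rfl⟩; exact a.2

lemma card_filter_le (r : ℕ) (hr : r < n) :
    (Finset.univ.filter fun j : Fin n => (j : ℕ) ≤ r).card = r + 1 := by
  have he : (Finset.univ.filter fun j : Fin n => (j : ℕ) ≤ r)
      = (Finset.univ.filter fun j : Fin n => (j : ℕ) < r + 1) := by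
    apply Finset.filter_congr; intro j _; simp [Nat.lt_succ_iff]
  rw [he]; exact card_filter_lt (r + 1) (by omega)

lemma card_filter_ge (r : ℕ) (hr : r ≤ n) :
    (Finset.univ.filter fun j : Fin n => r ≤ (j : ℕ)).card = n - r := by
  have h := Finset.card_filter_add_card_filter_not
    (s := (Finset.univ : Finset (Fin n))) (p := fun j : Fin n => r ≤ (j : ℕ))
  simp only [Finset.card_univ, Fintype.card_fin, not_le] at h
  have h2 := card_filter_lt (n := n) r hr
  omega

/-! ### index sets and spans -/

noncomputable def lowSet (M : Matrix (Fin m) (Fin n) ℝ) (r : ℕ) : Finset (Fin n) :=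
  (Finset.univ.filter fun j : Fin n => (j : ℕ) ≤ r).image (srt M)

noncomputable def highSet (M : Matrix (Fin m) (Fin n) ℝ) (r : ℕ) : Finset (Fin n) :=
  (Finset.univ.filter fun j : Fin n => r ≤ (j : ℕ)).image (srt M)

lemma card_lowSet (M : Matrix (Fin m) (Fin n) ℝ) {r : ℕ} (hr : r < n) :
    (lowSet M r).card = r + 1 := by
  rw [lowSet, Finset.card_image_of_injective _ (srt M).injective]
  exact card_filter_le r hr

lemma card_highSet (M : Matrix (Fin m) (Fin n) ℝ) {r : ℕ} (hr : r ≤ n) :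
    (highSet M r).card = n - r := by
  rw [highSet, Finset.card_image_of_injective _ (srt M).injective]
  exact card_filter_ge r hr

lemma lam_le_of_mem_lowSet (M : Matrix (Fin m) (Fin n) ℝ) {r : Fin n} {i : Fin n}
    (hi : i ∈ lowSet M (r : ℕ)) : lam M i ≤ mu M r := by
  rw [lowSet, Finset.mem_image] at hi
  obtain ⟨j, hj, rfl⟩ := hi
  simp only [Finset.mem_filter] at hj
  exact mu_mono M (by exact_mod_cast hj.2)

lemma le_lam_of_mem_highSet (M : Matrix (Fin m) (Fin n) ℝ) {r : Fin n} {i : Fin n}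
    (hi : i ∈ highSet M (r : ℕ)) : mu M r ≤ lam M i := by
  rw [highSet, Finset.mem_image] at hi
  obtain ⟨j, hj, rfl⟩ := hi
  simp only [Finset.mem_filter] at hj
  exact mu_mono M (by exact_mod_cast hj.2)

lemma finrank_span_image (M : Matrix (Fin m) (Fin n) ℝ) (S : Finset (Fin n)) :
    Module.finrank ℝ (Submodule.span ℝ (⇑(bas M) '' ↑S)) = S.card := by
  have hind : LinearIndependent ℝ (fun x : ↥(↑S : Set (Fin n)) => bas M x) :=
    ((bas M).orthonormal.linearIndependent).comp _ Subtype.val_injective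
  rw [Set.image_eq_range]
  rw [finrank_span_eq_card hind]
  simp

lemma repr_eq_zero_of_mem_span (M : Matrix (Fin m) (Fin n) ℝ) {S : Finset (Fin n)}
    {x : EuclideanSpace ℝ (Fin n)} (hx : x ∈ Submodule.span ℝ (⇑(bas M) '' ↑S))
    {i : Fin n} (hi : i ∉ S) : (bas M).repr x i = 0 := by
  rw [← OrthonormalBasis.coe_toBasis (bas M), Module.Basis.mem_span_image] at hx
  have h0 : (bas M).toBasis.repr x i = 0 := by
    by_contra h
    exact hi (hx (Finsupp.mem_support_iff.mpr h))
  rwa [OrthonormalBasis.coe_toBasis_repr_apply] at h0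

lemma quad_le (M : Matrix (Fin m) (Fin n) ℝ) {S : Finset (Fin n)} {c : ℝ}
    (hS : ∀ i ∈ S, lam M i ≤ c) {x : EuclideanSpace ℝ (Fin n)}
    (hx : x ∈ Submodule.span ℝ (⇑(bas M) '' ↑S)) :
    ‖Matrix.toEuclideanLin M x‖ ^ 2 ≤ c * ‖x‖ ^ 2 := by
  rw [norm_sq_apply, norm_sq M, Finset.mul_sum]
  apply Finset.sum_le_sum
  intro i _
  by_cases hi : i ∈ S
  · exact mul_le_mul_of_nonneg_right (hS i hi) (sq_nonneg _)
  · rw [repr_eq_zero_of_mem_span M hx hi]; simp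

lemma quad_ge (M : Matrix (Fin m) (Fin n) ℝ) {S : Finset (Fin n)} {c : ℝ}
    (hS : ∀ i ∈ S, c ≤ lam M i) (hc : 0 ≤ c) {x : EuclideanSpace ℝ (Fin n)}
    (hx : x ∈ Submodule.span ℝ (⇑(bas M) '' ↑S)) :
    c * ‖x‖ ^ 2 ≤ ‖Matrix.toEuclideanLin M x‖ ^ 2 := by
  rw [norm_sq_apply, norm_sq M, Finset.mul_sum]
  apply Finset.sum_le_sum
  intro i _
  by_cases hi : i ∈ S
  · exact mul_le_mul_of_nonneg_right (hS i hi) (sq_nonneg _)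
  · rw [repr_eq_zero_of_mem_span M hx hi]; simp


lemma sum_lam_eq (M : Matrix (Fin m) (Fin n) ℝ) :
    ∑ i, (show (Mᵀ * M).IsHermitian by simpa using Matrix.isHermitian_conjTranspose_mul_self M).eigenvalues i = ∑ i, ∑ j, M i j ^ 2 := by
  have hH := (show (Mᵀ * M).IsHermitian by simpa using Matrix.isHermitian_conjTranspose_mul_self M)
  have h1 : (Mᴴ * M).trace = ∑ i, hH.eigenvalues i := by
    change (Mᵀ * M).trace = _
    conv_lhs => rw [hH.spectral_theorem]
    rw [Unitary.conjStarAlgAut_apply, Matrix.trace_mul_cycle]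
    rw [Unitary.coe_star_mul_self]
    simp [Matrix.trace_diagonal]
  have h2 : (Mᴴ * M).trace = ∑ j, ∑ i, M i j ^ 2 := by
    rw [Matrix.trace]
    simp [Matrix.diag, Matrix.mul_apply, Matrix.conjTranspose_apply, sq]
  rw [← h1, h2, Finset.sum_comm]

lemma finrank_ker_ge (B : Matrix (Fin m) (Fin n) ℝ) (k : ℕ) (hB : B.rank ≤ k) :
    n - k ≤ Module.finrank ℝ (LinearMap.ker (Matrix.toEuclideanLin B)) := by
  have h := LinearMap.finrank_range_add_finrank_ker
    (Matrix.toEuclideanLin B : EuclideanSpace ℝ (Fin n) →ₗ[ℝ] EuclideanSpace ℝ (Fin m))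
  have hdom : Module.finrank ℝ (EuclideanSpace ℝ (Fin n)) = n := by
    simp [finrank_euclideanSpace]
  have hr : Module.finrank ℝ (LinearMap.range (Matrix.toEuclideanLin B)) = B.rank := by
    rw [Matrix.toEuclideanLin_eq_toLin]
    exact (B.rank_eq_finrank_range_toLin _ _).symm
  omega

lemma inf_ge (V W : Submodule ℝ (EuclideanSpace ℝ (Fin n))) :
    Module.finrank ℝ V + Module.finrank ℝ W ≤ n + Module.finrank ℝ ↥(V ⊓ W) := by
  have h := Submodule.finrank_sup_add_finrank_inf_eq V W
  have h2 : Module.finrank ℝ ↥(V ⊔ W) ≤ Module.finrank ℝ (EuclideanSpace ℝ (Fin n)) :=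
    Submodule.finrank_le (V ⊔ W)
  have h3 : Module.finrank ℝ (EuclideanSpace ℝ (Fin n)) = n := by
    simp [finrank_euclideanSpace]
  omega

lemma exists_ne_zero {W : Submodule ℝ (EuclideanSpace ℝ (Fin n))}
    (h : 0 < Module.finrank ℝ W) : ∃ x ∈ W, x ≠ 0 := by
  obtain ⟨⟨x, hx⟩, h0⟩ := Module.finrank_pos_iff_exists_ne_zero.mp h
  refine ⟨x, hx, fun hc => h0 ?_⟩
  exact Subtype.ext hc


lemma sum_sv_sq (M : Matrix (Fin m) (Fin n) ℝ) :
    ∑ j, sv M j ^ 2 = frobNorm M ^ 2 := by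
  have h0 : ∑ j, sv M j ^ 2 = ∑ j : Fin n, mu M j.rev := by
    simp only [sv_sq]
  have h1 : ∑ j : Fin n, mu M j.rev = ∑ j, mu M j :=
    Fintype.sum_bijective Fin.rev (Fin.rev_involutive.bijective)
      (fun j : Fin n => mu M j.rev) (mu M) (fun j => rfl)
  have h2 : ∑ j, mu M j = ∑ j, lam M j := Equiv.sum_comp (srt M) (lam M)
  have h3 : ∑ j, lam M j = ∑ i, ∑ j, M i j ^ 2 := sum_lam_eq M
  have h4 : frobNorm M ^ 2 = ∑ i, ∑ j, M i j ^ 2 := by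
    rw [frobNorm, Real.sq_sqrt (by positivity)]
  rw [h0, h1, h2, h3, h4]

lemma spec_le (hn : 0 < n) (M : Matrix (Fin m) (Fin n) ℝ) :
    specNorm M ≤ sv M ⟨0, hn⟩ := by
  refine ContinuousLinearMap.opNorm_le_bound _ (sv_nonneg M _) fun x => ?_
  have hb : ‖Matrix.toEuclideanLin M x‖ ^ 2 ≤ sv M ⟨0, hn⟩ ^ 2 * ‖x‖ ^ 2 := by
    rw [sv_sq, norm_sq_apply, norm_sq M, Finset.mul_sum]
    apply Finset.sum_le_sum
    intro i _
    apply mul_le_mul_of_nonneg_right _ (sq_nonneg _)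
    have he : lam M i = mu M ((srt M).symm i) := by
      simp [mu, srt]
    rw [he]
    apply mu_mono
    rw [Fin.le_def, Fin.val_rev]
    have := ((srt M).symm i).isLt
    simp only []
    omega
  have h1 : ‖(Matrix.toEuclideanLin M).toContinuousLinearMap x‖
      = ‖Matrix.toEuclideanLin M x‖ := rfl
  rw [h1]
  refine le_of_pow_le_pow_left₀ (two_ne_zero) (mul_nonneg (sv_nonneg M _) (norm_nonneg x)) ?_
  rw [mul_pow]
  exact hb

lemma weyl {k : ℕ} (A B : Matrix (Fin m) (Fin n) ℝ) (hB : B.rank ≤ k)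
    (j : Fin n) (hj : k ≤ (j : ℕ)) :
    sv A j ^ 2 ≤ sv (A - B) ⟨(j : ℕ) - k, lt_of_le_of_lt (Nat.sub_le _ _) j.isLt⟩ ^ 2 := by
  set i : Fin n := ⟨(j : ℕ) - k, lt_of_le_of_lt (Nat.sub_le _ _) j.isLt⟩ with hidef
  set W1 := Submodule.span ℝ (⇑(bas A) '' ↑(highSet A ((j.rev : ℕ)))) with hW1
  set K := LinearMap.ker (Matrix.toEuclideanLin B) with hK
  set W2 := Submodule.span ℝ (⇑(bas (A - B)) '' ↑(lowSet (A - B) ((i.rev : ℕ)))) with hW2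
  have hjrev : (j.rev : ℕ) = n - ((j : ℕ) + 1) := Fin.val_rev j
  have hirev : (i.rev : ℕ) = n - ((i : ℕ) + 1) := Fin.val_rev i
  have hjn := j.isLt
  have hin := i.isLt
  have hd1 : Module.finrank ℝ W1 = (j : ℕ) + 1 := by
    rw [hW1, finrank_span_image, card_highSet A (by omega)]
    omega
  have hd2 : Module.finrank ℝ W2 = n - (i : ℕ) := by
    rw [hW2, finrank_span_image, card_lowSet (A - B) (by omega : (i.rev : ℕ) < n)]
    omega
  have hdK := finrank_ker_ge B k hB
  rw [← hK] at hdK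
  have hival : (i : ℕ) = (j : ℕ) - k := rfl
  have hkj : k ≤ (j : ℕ) := hj
  have h12 := inf_ge W1 K
  have h3 := inf_ge (W1 ⊓ K) W2
  have hfin : 0 < Module.finrank ℝ ↥(W1 ⊓ K ⊓ W2) := by omega
  obtain ⟨x, hx, hx0⟩ := exists_ne_zero hfin
  have hx1 : x ∈ W1 := hx.1.1
  have hxK : x ∈ K := hx.1.2
  have hx2 : x ∈ W2 := hx.2
  have hxn : 0 < ‖x‖ ^ 2 := pow_pos (norm_pos_iff.mpr hx0) 2
  have hge : mu A j.rev * ‖x‖ ^ 2 ≤ ‖Matrix.toEuclideanLin A x‖ ^ 2 :=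
    quad_ge A (fun i' hi' => le_lam_of_mem_highSet A hi') (mu_nonneg A _) hx1
  have hle : ‖Matrix.toEuclideanLin (A - B) x‖ ^ 2 ≤ mu (A - B) i.rev * ‖x‖ ^ 2 :=
    quad_le (A - B) (fun i' hi' => lam_le_of_mem_lowSet (A - B) hi') hx2
  have hAB : Matrix.toEuclideanLin (A - B) x = Matrix.toEuclideanLin A x := by
    have hBx : Matrix.toEuclideanLin B x = 0 := hxK
    rw [map_sub, LinearMap.sub_apply, hBx, sub_zero]
  rw [sv_sq, sv_sq]
  have hchain : mu A j.rev * ‖x‖ ^ 2 ≤ mu (A - B) i.rev * ‖x‖ ^ 2 := by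
    rw [hAB] at hle
    linarith
  exact le_of_mul_le_mul_right (by linarith [hchain]) hxn

end SVH

open SVH in
theorem stmt11 {m n k : ℕ} (hmn : n ≤ m) (hn : 0 < n)
    (A B : Matrix (Fin m) (Fin n) ℝ) (hB : B.rank ≤ k) :
    sv (A - B) ⟨0, hn⟩ ^ 2 +
      (∑ j ∈ Finset.univ.filter (fun j : Fin n => k + 1 ≤ (j : ℕ)), sv A j ^ 2)
      ≤ frobNorm (A - B) ^ 2 ∧
    specNorm (A - B) ^ 2 ≤ frobNorm (A - B) ^ 2 -
      ∑ j ∈ Finset.univ.filter (fun j : Fin n => k + 1 ≤ (j : ℕ)), sv A j ^ 2 := by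
  classical
  set T := Finset.univ.filter (fun j : Fin n => k + 1 ≤ (j : ℕ)) with hT
  set f : Fin n → Fin n := fun j => ⟨(j : ℕ) - k, lt_of_le_of_lt (Nat.sub_le _ _) j.isLt⟩
    with hf
  have hsum1 : ∑ j ∈ T, sv A j ^ 2 ≤ ∑ j ∈ T, sv (A - B) (f j) ^ 2 := by
    apply Finset.sum_le_sum
    intro j hj
    rw [hT, Finset.mem_filter] at hj
    exact weyl A B hB j (by omega)
  have himg : ∑ j ∈ T, sv (A - B) (f j) ^ 2 = ∑ j' ∈ T.image f, sv (A - B) j' ^ 2 := by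
    rw [Finset.sum_image]
    intro a ha b hb hab
    rw [hT, Finset.mem_coe, Finset.mem_filter] at ha hb
    have : ((a : ℕ) - k) = ((b : ℕ) - k) := congrArg Fin.val hab
    exact Fin.ext (by omega)
  have hsub : T.image f ⊆ Finset.univ.filter (fun j : Fin n => 1 ≤ (j : ℕ)) := by
    intro j' hj'
    rw [Finset.mem_image] at hj'
    obtain ⟨j, hj, rfl⟩ := hj'
    rw [hT, Finset.mem_filter] at hj
    simp only [Finset.mem_filter, Finset.mem_univ, true_and, hf]
    omega
  have hsum2 : ∑ j' ∈ T.image f, sv (A - B) j' ^ 2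
      ≤ ∑ j' ∈ Finset.univ.filter (fun j : Fin n => 1 ≤ (j : ℕ)), sv (A - B) j' ^ 2 :=
    Finset.sum_le_sum_of_subset_of_nonneg hsub (fun _ _ _ => sq_nonneg _)
  have hsplit : sv (A - B) ⟨0, hn⟩ ^ 2 +
      ∑ j' ∈ Finset.univ.filter (fun j : Fin n => 1 ≤ (j : ℕ)), sv (A - B) j' ^ 2
      = frobNorm (A - B) ^ 2 := by
    rw [← sum_sv_sq (A - B),
      ← Finset.sum_filter_add_sum_filter_not Finset.univ (fun j : Fin n => 1 ≤ (j : ℕ))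
        (fun j => sv (A - B) j ^ 2)]
    have hone : Finset.univ.filter (fun j : Fin n => ¬ 1 ≤ (j : ℕ)) = {⟨0, hn⟩} := by
      ext j
      simp only [Finset.mem_filter, Finset.mem_univ, true_and, Finset.mem_singleton,
        Fin.ext_iff]
      omega
    rw [hone, Finset.sum_singleton]
    ring
  have hpart1 : sv (A - B) ⟨0, hn⟩ ^ 2 + ∑ j ∈ T, sv A j ^ 2 ≤ frobNorm (A - B) ^ 2 := by
    rw [himg] at hsum1
    linarith
  refine ⟨hpart1, ?_⟩
  have hspec := spec_le hn (A - B)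
  have hspec0 : (0 : ℝ) ≤ specNorm (A - B) := norm_nonneg _
  have hspec2 : specNorm (A - B) ^ 2 ≤ sv (A - B) ⟨0, hn⟩ ^ 2 :=
    pow_le_pow_left₀ hspec0 hspec 2
  linarith
end
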